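/- Let b > 0 and u ∈ C¹([0,b], ℂ) with u(0) = 0. Then ∫₀ᵇ |u'(t)|² dt ≥ (1/4)∫₀ᵇ [ t⁻² + b⁻² ] |u(t)|² dt. -/

import Mathlib

open MeasureTheory Set intervalIntegral

/-- Cauchy–Schwarz for the real inner product on ℂ. -/
lemma aux_re_prod_le (z w : ℂ) : |z.re * w.re + z.im * w.im| ≤ ‖z‖ * ‖w‖ := by
  have h : z.re * w.re + z.im * w.im = ((starRingEnd ℂ) z * w).re := by
    simp [Complex.mul_re]
  rw [h]
  calc |((starRingEnd ℂ) z * w).re| ≤ ‖(starRingEnd ℂ) z * w‖ :=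
        Complex.abs_re_le_norm _
    _ = ‖z‖ * ‖w‖ := by
        rw [norm_mul]
        simp

/-- A function continuous and bounded on an open interval is interval integrable. -/
lemma aux_bdd_intervalIntegrable {a b M : ℝ} (hab : a ≤ b) {f : ℝ → ℝ}
    (hf : ContinuousOn f (Set.Ioo a b)) (hM : ∀ t ∈ Set.Ioo a b, |f t| ≤ M) :
    IntervalIntegrable f volume a b := by
  rw [intervalIntegrable_iff_integrableOn_Ioc_of_le hab]
  have h1 : Integrable f (volume.restrict (Set.Ioo a b)) := by
    have h2 := Measure.integrableOn_of_bounded (μ := volume.restrict (Set.Ioo a b))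
      (s := Set.univ) (f := f) (M := M) ?_ ?_ ?_
    · simpa [MeasureTheory.integrableOn_univ] using h2
    · simp [Real.volume_Ioo]
    · exact hf.aestronglyMeasurable measurableSet_Ioo
    · rw [Measure.restrict_univ]
      rw [ae_restrict_iff' measurableSet_Ioo]
      exact Filter.Eventually.of_forall (fun t ht => by simpa using hM t ht)
  unfold IntegrableOn
  rwa [← Measure.restrict_congr_set Ioo_ae_eq_Ioc]

set_option maxHeartbeats 1000000 in
theorem dirichlet_limit_hardy (b : ℝ) (hb : 0 < b) (u : ℝ → ℂ)
    (hu : ContDiffOn ℝ 1 u (Set.Icc 0 b)) (hu0 : u 0 = 0) :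
    (∫ t in (0:ℝ)..b, ‖deriv u t‖ ^ 2) ≥
      (1 / 4) * ∫ t in (0:ℝ)..b, ((t ^ 2)⁻¹ + (b ^ 2)⁻¹) * ‖u t‖ ^ 2 := by
  set v : ℝ → ℂ := derivWithin u (Set.Icc 0 b) with hv
  have hud : UniqueDiffOn ℝ (Set.Icc (0:ℝ) b) := uniqueDiffOn_Icc hb
  have hvc : ContinuousOn v (Set.Icc 0 b) := hu.continuousOn_derivWithin hud le_rfl
  have huc : ContinuousOn u (Set.Icc 0 b) := hu.continuousOn
  -- a bound on the derivative
  obtain ⟨C₀, hC₀⟩ := isCompact_Icc.exists_bound_of_continuousOn hvc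
  set C : ℝ := max C₀ 0 with hCdef
  have hC0 : (0:ℝ) ≤ C := le_max_right _ _
  have hvC : ∀ t ∈ Set.Icc (0:ℝ) b, ‖v t‖ ≤ C := fun t ht => (hC₀ t ht).trans (le_max_left _ _)
  -- bound on u
  have huC : ∀ t ∈ Set.Icc (0:ℝ) b, ‖u t‖ ≤ C * t := by
    intro t ht
    have h0 : (0:ℝ) ∈ Set.Icc (0:ℝ) b := ⟨le_rfl, hb.le⟩
    have := Convex.norm_image_sub_le_of_norm_derivWithin_le
      (hu.differentiableOn one_ne_zero) hvC (convex_Icc 0 b) h0 ht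
    simpa [hu0, Real.norm_eq_abs, abs_of_nonneg ht.1] using this
  -- derivative at interior points
  have hder : ∀ t ∈ Set.Ioo (0:ℝ) b, HasDerivAt u (v t) t := by
    intro t ht
    have h1 : Set.Icc (0:ℝ) b ∈ nhds t :=
      Icc_mem_nhds ht.1 ht.2
    exact (((hu.differentiableOn one_ne_zero) t (Set.mem_Icc_of_Ioo ht)).hasDerivWithinAt).hasDerivAt h1
  have hderiv_eq : ∀ t ∈ Set.Ioo (0:ℝ) b, deriv u t = v t := fun t ht => (hder t ht).deriv
  -- real and imaginary parts
  have hnorm : ∀ z : ℂ, ‖z‖ ^ 2 = z.re ^ 2 + z.im ^ 2 := by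
    intro z
    rw [Complex.sq_norm, Complex.normSq_apply]
    ring
  set m : ℝ → ℝ := fun t => (u t).re ^ 2 + (u t).im ^ 2 with hm
  set p : ℝ → ℝ := fun t => (u t).re * (v t).re + (u t).im * (v t).im with hp
  set c : ℝ → ℝ := fun t => 2⁻¹ * t⁻¹ - (2 * b ^ 2)⁻¹ * t with hc
  set c' : ℝ → ℝ := fun t => 2⁻¹ * -(t ^ 2)⁻¹ - (2 * b ^ 2)⁻¹ * 1 with hc'
  set G : ℝ → ℝ := fun t => c t * m t with hG
  set G' : ℝ → ℝ := fun t => c' t * m t + c t * (2 * p t) with hG'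
  -- derivative of G on the interior
  have hGder : ∀ t ∈ Set.Ioo (0:ℝ) b, HasDerivAt G (G' t) t := by
    intro t ht
    have hut := hder t ht
    have hre : HasDerivAt (fun s => (u s).re) ((v t).re) t :=
      (Complex.reCLM.hasFDerivAt).comp_hasDerivAt t hut
    have him : HasDerivAt (fun s => (u s).im) ((v t).im) t :=
      (Complex.imCLM.hasFDerivAt).comp_hasDerivAt t hut
    have hmder : HasDerivAt m (2 * p t) t := by
      have := (hre.pow 2).add (him.pow 2)
      refine this.congr_deriv ?_
      simp [hp]
      ring
    have hcder : HasDerivAt c (c' t) t := by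
      have h1 := (hasDerivAt_inv (ne_of_gt ht.1)).const_mul (2⁻¹ : ℝ)
      have h2 := (hasDerivAt_id t).const_mul ((2 * b ^ 2)⁻¹ : ℝ)
      exact h1.sub h2
    exact hcder.mul hmder
  -- continuity of G on [0, b]
  have hmc : ContinuousOn m (Set.Icc 0 b) := by
    apply ContinuousOn.add
    · exact ((Complex.continuous_re.comp_continuousOn huc).pow 2)
    · exact ((Complex.continuous_im.comp_continuousOn huc).pow 2)
  have hmub : ∀ t ∈ Set.Icc (0:ℝ) b, m t ≤ C ^ 2 * t ^ 2 := by
    intro t ht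
    have h1 := huC t ht
    have h2 : m t = ‖u t‖ ^ 2 := (hnorm (u t)).symm
    rw [h2]
    have h3 : (0:ℝ) ≤ ‖u t‖ := norm_nonneg _
    nlinarith [mul_nonneg hC0 ht.1]
  have hm_nonneg : ∀ t, 0 ≤ m t := fun t => by positivity
  have hGbound : ∀ t ∈ Set.Icc (0:ℝ) b, |G t| ≤ C ^ 2 * t := by
    intro t ht
    rcases eq_or_lt_of_le ht.1 with h0 | h0
    · simp [hG, hm, ← h0, hu0]
    · have hct : |c t| ≤ 2⁻¹ * t⁻¹ + (2 * b ^ 2)⁻¹ * t := by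
        rw [hc]
        refine (abs_sub _ _).trans ?_
        rw [abs_of_nonneg (by positivity), abs_of_nonneg (by positivity)]
      have h1 : |G t| = |c t| * m t := by
        rw [hG, abs_mul, abs_of_nonneg (hm_nonneg t)]
      rw [h1]
      have h2 := hmub t ht
      have h3 : |c t| * m t ≤ (2⁻¹ * t⁻¹ + (2 * b ^ 2)⁻¹ * t) * (C ^ 2 * t ^ 2) :=
        mul_le_mul hct h2 (hm_nonneg t) (by positivity)
      refine h3.trans ?_
      have ht0 : (0:ℝ) < t := h0
      have htb : t ≤ b := ht.2
      have h4 : (2⁻¹ * t⁻¹ + (2 * b ^ 2)⁻¹ * t) * (C ^ 2 * t ^ 2)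
          = C ^ 2 * t / 2 + C ^ 2 * t ^ 3 / (2 * b ^ 2) := by
        field_simp
      rw [h4]
      have h5 : t ^ 3 ≤ t * b ^ 2 := by
        nlinarith [mul_le_mul_of_nonneg_left (by nlinarith : t ^ 2 ≤ b ^ 2) ht0.le]
      have h6 : C ^ 2 * t ^ 3 / (2 * b ^ 2) ≤ C ^ 2 * t / 2 := by
        rw [div_le_div_iff₀ (by positivity) (by positivity)]
        nlinarith [mul_le_mul_of_nonneg_left h5 (sq_nonneg C)]
      linarith
  have hGcont : ContinuousOn G (Set.Icc 0 b) := by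
    intro t ht
    rcases eq_or_lt_of_le ht.1 with h0 | h0
    · -- continuity at 0 by squeezing
      rw [← h0]
      have hG0 : G 0 = 0 := by simp [hG, hm, hu0]
      unfold ContinuousWithinAt
      rw [hG0]
      apply squeeze_zero_norm' (a := fun t => C ^ 2 * t)
      · exact eventually_mem_nhdsWithin.mono (fun s hs => hGbound s hs)
      · have : Filter.Tendsto (fun t : ℝ => C ^ 2 * t) (nhds 0) (nhds 0) := by
          simpa using (continuous_mul_left (C ^ 2)).tendsto (0:ℝ)
        exact this.mono_left nhdsWithin_le_nhds
    · have hcc : ContinuousWithinAt c (Set.Icc 0 b) t := by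
        apply ContinuousAt.continuousWithinAt
        apply ContinuousAt.sub
        · exact (continuousAt_const.mul (continuousAt_inv₀ (ne_of_gt h0)))
        · exact continuousAt_const.mul continuousAt_id
      exact hcc.mul (hmc t ht)
  -- value at endpoints
  have hGb : G b = 0 := by
    have : c b = 0 := by
      rw [hc]
      field_simp
      ring
    simp [hG, this]
  have hG0 : G 0 = 0 := by simp [hG, hm, hu0]
  -- pointwise inequality on the interior
  have hpoint : ∀ t ∈ Set.Ioo (0:ℝ) b,
      G' t ≤ ‖deriv u t‖ ^ 2 - 1 / 4 * (((t ^ 2)⁻¹ + (b ^ 2)⁻¹) * ‖u t‖ ^ 2) := by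
    intro t ht
    rw [hderiv_eq t ht, hnorm (v t), hnorm (u t)]
    set a1 := (v t).re
    set a2 := (v t).im
    set c1 := (u t).re
    set c2 := (u t).im
    have ht0 : (0:ℝ) < t := ht.1
    have htb : t < b := ht.2
    rw [← sub_nonneg]
    have key : a1 ^ 2 + a2 ^ 2 - 1 / 4 * (((t ^ 2)⁻¹ + (b ^ 2)⁻¹) * (c1 ^ 2 + c2 ^ 2)) - G' t
        = ((2 * t * b ^ 2 * a1 + (t ^ 2 - b ^ 2) * c1) ^ 2
          + (2 * t * b ^ 2 * a2 + (t ^ 2 - b ^ 2) * c2) ^ 2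
          + t ^ 2 * (3 * b ^ 2 - t ^ 2) * (c1 ^ 2 + c2 ^ 2)) / (4 * t ^ 2 * b ^ 4) := by
      rw [hG', hc', hc, hm, hp]
      field_simp
      ring
    rw [key]
    apply div_nonneg _ (by positivity)
    have h5 : (0:ℝ) ≤ 3 * b ^ 2 - t ^ 2 := by nlinarith
    positivity
  -- integrability facts
  have hderiv_cont : ContinuousOn (fun t => ‖deriv u t‖ ^ 2) (Set.Ioo 0 b) := by
    apply ContinuousOn.congr (f := fun t => ‖v t‖ ^ 2)
    · exact ((hvc.mono Set.Ioo_subset_Icc_self).norm.pow 2)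
    · intro t ht
      simp only [hderiv_eq t ht]
  have I1 : IntervalIntegrable (fun t => ‖deriv u t‖ ^ 2) volume 0 b := by
    apply aux_bdd_intervalIntegrable hb.le hderiv_cont (M := C ^ 2)
    intro t ht
    rw [hderiv_eq t ht, abs_of_nonneg (by positivity)]
    have := hvC t (Set.mem_Icc_of_Ioo ht)
    nlinarith [norm_nonneg (v t)]
  have I2 : IntervalIntegrable (fun t => ((t ^ 2)⁻¹ + (b ^ 2)⁻¹) * ‖u t‖ ^ 2) volume 0 b := by
    apply aux_bdd_intervalIntegrable hb.le (M := 2 * C ^ 2)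
    · apply ContinuousOn.mul
      · apply ContinuousOn.add
        · intro t ht
          exact ContinuousAt.continuousWithinAt
            ((continuousAt_pow t 2).inv₀ (pow_ne_zero 2 (ne_of_gt ht.1)))
        · exact continuousOn_const
      · exact ((huc.mono Set.Ioo_subset_Icc_self).norm.pow 2)
    · intro t ht
      have ht0 : (0:ℝ) < t := ht.1
      have htb : t < b := ht.2
      have h1 : ‖u t‖ ^ 2 ≤ C ^ 2 * t ^ 2 := by
        have := huC t (Set.mem_Icc_of_Ioo ht)
        nlinarith [norm_nonneg (u t), mul_nonneg hC0 ht0.le]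
      rw [abs_of_nonneg (by positivity)]
      have h2 : ((t ^ 2)⁻¹ + (b ^ 2)⁻¹) * ‖u t‖ ^ 2 ≤ ((t ^ 2)⁻¹ + (b ^ 2)⁻¹) * (C ^ 2 * t ^ 2) := by
        apply mul_le_mul_of_nonneg_left h1 (by positivity)
      refine h2.trans ?_
      have h3 : ((t ^ 2)⁻¹ + (b ^ 2)⁻¹) * (C ^ 2 * t ^ 2) = C ^ 2 + C ^ 2 * t ^ 2 / b ^ 2 := by
        field_simp
      rw [h3]
      have h4 : C ^ 2 * t ^ 2 / b ^ 2 ≤ C ^ 2 := by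
        rw [div_le_iff₀ (by positivity)]
        nlinarith [mul_le_mul_of_nonneg_left (by nlinarith : t ^ 2 ≤ b ^ 2) (sq_nonneg C)]
      linarith
  have I3 : IntervalIntegrable G' volume 0 b := by
    apply aux_bdd_intervalIntegrable hb.le (M := 3 * C ^ 2)
    · rw [hG']
      apply ContinuousOn.add
      · apply ContinuousOn.mul
        · rw [hc']
          apply ContinuousOn.sub _ continuousOn_const
          intro t ht
          apply ContinuousAt.continuousWithinAt
          apply ContinuousAt.mul continuousAt_const
          exact ((continuousAt_pow t 2).inv₀ (pow_ne_zero 2 (ne_of_gt ht.1))).neg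
        · exact hmc.mono Set.Ioo_subset_Icc_self
      · apply ContinuousOn.mul
        · rw [hc]
          apply ContinuousOn.sub
          · intro t ht
            exact ContinuousAt.continuousWithinAt
              (ContinuousAt.mul continuousAt_const (continuousAt_inv₀ (ne_of_gt ht.1)))
          · exact (continuous_const.mul continuous_id).continuousOn
        · apply ContinuousOn.mul continuousOn_const
          rw [hp]
          apply ContinuousOn.add
          · exact (Complex.continuous_re.comp_continuousOn
              (huc.mono Set.Ioo_subset_Icc_self)).mul
              (Complex.continuous_re.comp_continuousOn (hvc.mono Set.Ioo_subset_Icc_self))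
          · exact (Complex.continuous_im.comp_continuousOn
              (huc.mono Set.Ioo_subset_Icc_self)).mul
              (Complex.continuous_im.comp_continuousOn (hvc.mono Set.Ioo_subset_Icc_self))
    · intro t ht
      have ht0 : (0:ℝ) < t := ht.1
      have htb : t < b := ht.2
      have hmt := hmub t (Set.mem_Icc_of_Ioo ht)
      have hpt : |p t| ≤ C ^ 2 * t := by
        refine (aux_re_prod_le (u t) (v t)).trans ?_
        have h1 := huC t (Set.mem_Icc_of_Ioo ht)
        have h2 := hvC t (Set.mem_Icc_of_Ioo ht)
        calc ‖u t‖ * ‖v t‖ ≤ (C * t) * C :=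
              mul_le_mul h1 h2 (norm_nonneg _) (by positivity)
          _ = C ^ 2 * t := by ring
      have hc'abs : |c' t| ≤ 2⁻¹ * (t ^ 2)⁻¹ + (2 * b ^ 2)⁻¹ := by
        have h0 : (0:ℝ) ≤ (t ^ 2)⁻¹ := by positivity
        have h1 : (0:ℝ) ≤ (2 * b ^ 2)⁻¹ := by positivity
        simp only [hc']
        rw [abs_le]
        constructor
        · nlinarith [abs_nonneg ((2:ℝ) * b ^ 2)⁻¹]
        · nlinarith
      have hcabs : |c t| ≤ 2⁻¹ * t⁻¹ + (2 * b ^ 2)⁻¹ * t := by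
        simp only [hc]
        refine (abs_sub _ _).trans ?_
        rw [abs_of_nonneg (by positivity), abs_of_nonneg (by positivity)]
      have hstep : |G' t| ≤ |c' t| * m t + |c t| * (2 * |p t|) := by
        simp only [hG']
        refine (abs_add_le _ _).trans ?_
        rw [abs_mul, abs_of_nonneg (hm_nonneg t), abs_mul, abs_mul,
          abs_of_nonneg (by norm_num : (0:ℝ) ≤ 2)]
      have e1 : (2⁻¹ * (t ^ 2)⁻¹ + (2 * b ^ 2)⁻¹) * (C ^ 2 * t ^ 2)
          = C ^ 2 / 2 + C ^ 2 * t ^ 2 / (2 * b ^ 2) := by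
        field_simp
      have e2 : (2⁻¹ * t⁻¹ + (2 * b ^ 2)⁻¹ * t) * (2 * (C ^ 2 * t))
          = C ^ 2 + C ^ 2 * t ^ 2 / b ^ 2 := by
        field_simp
      have hb1 : C ^ 2 * t ^ 2 / (2 * b ^ 2) ≤ C ^ 2 / 2 := by
        rw [div_le_div_iff₀ (by positivity) (by positivity)]
        nlinarith [mul_le_mul_of_nonneg_left (by nlinarith : t ^ 2 ≤ b ^ 2) (sq_nonneg C)]
      have hb2 : C ^ 2 * t ^ 2 / b ^ 2 ≤ C ^ 2 := by
        rw [div_le_iff₀ (by positivity)]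
        nlinarith [mul_le_mul_of_nonneg_left (by nlinarith : t ^ 2 ≤ b ^ 2) (sq_nonneg C)]
      have t1 : |c' t| * m t ≤ C ^ 2 := by
        calc |c' t| * m t ≤ (2⁻¹ * (t ^ 2)⁻¹ + (2 * b ^ 2)⁻¹) * (C ^ 2 * t ^ 2) :=
              mul_le_mul hc'abs hmt (hm_nonneg t) (by positivity)
          _ = C ^ 2 / 2 + C ^ 2 * t ^ 2 / (2 * b ^ 2) := e1
          _ ≤ C ^ 2 := by linarith
      have t2 : |c t| * (2 * |p t|) ≤ 2 * C ^ 2 := by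
        calc |c t| * (2 * |p t|) ≤ (2⁻¹ * t⁻¹ + (2 * b ^ 2)⁻¹ * t) * (2 * (C ^ 2 * t)) := by
              apply mul_le_mul hcabs (by linarith) (by positivity) (by positivity)
          _ = C ^ 2 + C ^ 2 * t ^ 2 / b ^ 2 := e2
          _ ≤ 2 * C ^ 2 := by linarith
      linarith
  -- fundamental theorem of calculus
  have hFTC : ∫ t in (0:ℝ)..b, G' t = 0 := by
    rw [intervalIntegral.integral_eq_sub_of_hasDerivAt_of_le hb.le hGcont hGder I3,
      hGb, hG0, sub_zero]
  have Imix : IntervalIntegrable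
      (fun t => ‖deriv u t‖ ^ 2 - 1 / 4 * (((t ^ 2)⁻¹ + (b ^ 2)⁻¹) * ‖u t‖ ^ 2)) volume 0 b :=
    I1.sub (I2.const_mul (1 / 4))
  have hae : (fun t => G' t) ≤ᶠ[ae (volume.restrict (Set.Icc 0 b))]
      fun t => ‖deriv u t‖ ^ 2 - 1 / 4 * (((t ^ 2)⁻¹ + (b ^ 2)⁻¹) * ‖u t‖ ^ 2) := by
    rw [Filter.EventuallyLE, ← Measure.restrict_congr_set Ioo_ae_eq_Icc,
      ae_restrict_iff' measurableSet_Ioo]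
    exact Filter.Eventually.of_forall (fun t ht => hpoint t ht)
  have hmono := intervalIntegral.integral_mono_ae_restrict hb.le I3 Imix hae
  rw [hFTC, intervalIntegral.integral_sub I1 (I2.const_mul (1 / 4)),
    intervalIntegral.integral_const_mul] at hmono
  linarith
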